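/- arXiv:1511.02913 — 2 statements merged into one kernel-verified Lean document; each statement's English description precedes it below -/
import Mathlib

section
/- Let G be a strongly connected digraph, s a start vertex, and e=(u,v) a strong bridge that is a bridge in the flow graph G_s. For every strongly connected component C of G\e satisfying C ⊆ D(v), there exists a vertex w ∈ C that is an ancestor in the loop nesting tree H of all vertices of C. -/
namespace StrongConn

variable {V : Type*}

/-- `p` is a walk in the digraph `G` from `u` to `v`, recorded as the list of visited vertices. -/
def IsWalk (G : V → V → Prop) (u v : V) (p : List V) : Prop :=
  p.Chain' G ∧ p.head? = some u ∧ p.getLast? = some v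

/-- The directed edge `(a,b)` occurs on the walk `p`. -/
def EdgeOn (a b : V) (p : List V) : Prop := (a, b) ∈ p.zip p.tail

/-- `v` is reachable from `u` in `G`. -/
def Reach (G : V → V → Prop) (u v : V) : Prop := ∃ p, IsWalk G u v p

/-- `u` and `v` are strongly connected in `G`. -/
def SConn (G : V → V → Prop) (u v : V) : Prop := Reach G u v ∧ Reach G v u

def StronglyConnected (G : V → V → Prop) : Prop := ∀ u v, Reach G u v

/-- `G` with the edge `(a,b)` deleted. -/
def DelEdge (G : V → V → Prop) (a b : V) : V → V → Prop :=
  fun x y => G x y ∧ ¬(x = a ∧ y = b)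

/-- `G` with the vertex `u` (and all incident edges) deleted. -/
def DelVertex (G : V → V → Prop) (u : V) : V → V → Prop :=
  fun x y => G x y ∧ x ≠ u ∧ y ≠ u

/-- `C` is a strongly connected component of `G`. -/
def IsSCC (G : V → V → Prop) (C : Set V) : Prop :=
  C.Nonempty ∧ (∀ x ∈ C, ∀ y ∈ C, SConn G x y) ∧ ∀ x ∈ C, ∀ y, SConn G x y → y ∈ C

/-- `(a,b)` is a strong bridge: an edge whose removal increases the number of
strongly connected components, i.e. it separates some strongly connected pair. -/
def IsStrongBridge (G : V → V → Prop) (a b : V) : Prop :=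
  G a b ∧ ∃ x y, SConn G x y ∧ ¬ SConn (DelEdge G a b) x y

/-- `u` is a strong articulation point: removing it increases the number of strongly
connected components, i.e. it separates some strongly connected pair of other vertices. -/
def IsStrongArticulationPoint (G : V → V → Prop) (u : V) : Prop :=
  ∃ x y, x ≠ u ∧ y ≠ u ∧ SConn G x y ∧ ¬ SConn (DelVertex G u) x y

/-- The reverse digraph. -/
def Rev (G : V → V → Prop) : V → V → Prop := fun x y => G y x

/-- `u` dominates `v` in the flow graph `G_s`; equivalently, `u` is an ancestor of `v`
(and `v` a descendant of `u`) in the dominator tree of `G_s`. -/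
def Dom (G : V → V → Prop) (s u v : V) : Prop :=
  ∀ p, IsWalk G s v p → u ∈ p

/-- `u` is the immediate dominator of `v` in `G_s` (the parent of `v` in the dominator tree). -/
def Idom (G : V → V → Prop) (s u v : V) : Prop :=
  u ≠ v ∧ Dom G s u v ∧ ∀ w, w ≠ v → Dom G s w v → Dom G s w u

/-- Edge `(a,b)` is a bridge of the flow graph `G_s`: every walk from `s` to `b` uses it. -/
def IsBridge (G : V → V → Prop) (s a b : V) : Prop :=
  G a b ∧ ∀ p, IsWalk G s b p → EdgeOn a b p

/-- `r` is the head of some bridge of `G_s`, i.e. a non-`s` root in the bridge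
decomposition of the dominator tree. -/
def IsBridgeHead (G : V → V → Prop) (s r : V) : Prop :=
  ∃ a, IsBridge G s a r

/-- `r` is the root of the tree containing `x` in the bridge decomposition of the
dominator tree of `G_s`: `r` dominates `x`, `r` is `s` or a bridge head, and every
bridge head dominating `x` dominates `r`. -/
def IsBDRoot (G : V → V → Prop) (s r x : V) : Prop :=
  Dom G s r x ∧ (r = s ∨ IsBridgeHead G s r) ∧
    ∀ z, Dom G s z x → IsBridgeHead G s z → Dom G s z r

/-- A depth-first search tree of `G` rooted at `s`, given by a parent function and a
preorder numbering. -/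
structure DFSTree (G : V → V → Prop) (s : V) where
  parent : V → V
  pre : V → ℕ
  parent_root : parent s = s
  parent_edge : ∀ v, v ≠ s → G (parent v) v
  root_reach : ∀ v, ∃ n, parent^[n] v = s
  pre_inj : Function.Injective pre
  pre_parent : ∀ v, v ≠ s → pre (parent v) < pre v
  /-- Descendants of a vertex form a contiguous interval in preorder. -/
  interval : ∀ u v w, (∃ n, parent^[n] w = u) → pre u ≤ pre v → pre v ≤ pre w →
      ∃ n, parent^[n] v = u
  /-- The defining property of depth-first search trees: every edge going forward
  in preorder goes to a descendant. -/
  dfs_edge : ∀ u v, G u v → pre u < pre v → ∃ n, parent^[n] v = u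

/-- `u` is an ancestor of `v` in the tree `T` (every vertex is an ancestor of itself). -/
def DFSTree.Anc {G : V → V → Prop} {s : V} (T : DFSTree G s) (u v : V) : Prop :=
  ∃ n, T.parent^[n] v = u

/-- `x ∈ loop(u)` with respect to the tree-ancestor relation `tanc`: `x` is a descendant
of `u` and there is a walk from `x` to `u` using only descendants of `u`. -/
def InLoop (G : V → V → Prop) (tanc : V → V → Prop) (u x : V) : Prop :=
  tanc u x ∧ ∃ p, IsWalk G x u p ∧ ∀ y ∈ p, tanc u y

/-- `hp` is the parent function of the loop nesting tree of `G_s` with respect to the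
DFS-tree ancestor relation `tanc`: `hp x` is the nearest proper ancestor `u` of `x`
in the DFS tree with `x ∈ loop(u)`. -/
def IsLoopParent (G : V → V → Prop) (s : V) (tanc : V → V → Prop) (hp : V → V) : Prop :=
  hp s = s ∧ ∀ x, x ≠ s →
    (tanc (hp x) x ∧ hp x ≠ x ∧ InLoop G tanc (hp x) x ∧
      ∀ u, tanc u x → u ≠ x → InLoop G tanc u x → tanc u (hp x))

/-- `u` is an ancestor of `v` in the loop nesting tree with parent function `hp`. -/
def HAnc (hp : V → V) (u v : V) : Prop := ∃ n, hp^[n] v = u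

/-- `w` is the nearest common ancestor of `x` and `y` in the loop nesting tree
with parent function `hp`. -/
def HNca (hp : V → V) (x y w : V) : Prop :=
  HAnc hp w x ∧ HAnc hp w y ∧ ∀ z, HAnc hp z x → HAnc hp z y → HAnc hp z w

/-- `u` is a nontrivial dominator of `G_s`: `u ≠ s` and `u` is not a leaf of the
dominator tree (it properly dominates some vertex). -/
def NontrivialDom (G : V → V → Prop) (s u : V) : Prop :=
  u ≠ s ∧ ∃ w, w ≠ u ∧ Dom G s u w

/-- `a` and `b` are siblings in the dominator tree of `G_s`. -/
def SiblingInD (G : V → V → Prop) (s a b : V) : Prop :=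
  a ≠ b ∧ ∃ w, Idom G s w a ∧ Idom G s w b

/-- Given the bridge-decomposition root function `r` and loop-nesting parent `hp`,
`z` is a boundary vertex. -/
def Boundary (s : V) (r hp : V → V) (z : V) : Prop := z = s ∨ r (hp z) ≠ r z

/-- `z` is the nearest boundary ancestor of `x` in the loop nesting tree. -/
def IsNearestBoundary (s : V) (r hp : V → V) (x z : V) : Prop :=
  HAnc hp z x ∧ Boundary s r hp z ∧
    ∀ z', HAnc hp z' x → Boundary s r hp z' → HAnc hp z' z

/-- `x` and `y` are 2-edge-connected: no single edge deletion leaves them in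
different strongly connected components. -/
def TwoEdgeConnected (G : V → V → Prop) (x y : V) : Prop :=
  ∀ a b, G a b → SConn (DelEdge G a b) x y


section Aux

variable {G : V → V → Prop} {s : V}

lemma isWalk_mono {G' : V → V → Prop} (h : ∀ a b, G a b → G' a b) {a b : V} {p : List V}
    (hw : IsWalk G a b p) : IsWalk G' a b p :=
  ⟨hw.1.imp h, hw.2.1, hw.2.2⟩

lemma isWalk_singleton (G : V → V → Prop) (a : V) : IsWalk G a a [a] :=
  ⟨List.isChain_singleton a, rfl, rfl⟩

lemma isWalk_cons {a b c : V} {p : List V} (h : G a b) (hw : IsWalk G b c p) :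
    IsWalk G a c (a :: p) := by
  obtain ⟨hc, hh, hl⟩ := hw
  cases p with
  | nil => simp at hh
  | cons d q =>
    obtain rfl : d = b := by simpa using hh
    exact ⟨List.isChain_cons_cons.mpr ⟨h, hc⟩, rfl, by simpa using hl⟩

lemma isWalk_append {a b c : V} {p q : List V} (h1 : IsWalk G a b p) (h2 : IsWalk G b c q) :
    IsWalk G a c (p ++ q.tail) := by
  obtain ⟨hc1, hh1, hl1⟩ := h1
  obtain ⟨hc2, hh2, hl2⟩ := h2
  cases q with
  | nil => simp at hh2
  | cons b' t =>
    have hb : b' = b := by simpa using hh2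
    subst hb
    cases t with
    | nil =>
      have hbc : b' = c := by simpa using hl2
      subst hbc
      simpa [IsWalk] using And.intro hc1 (And.intro hh1 hl1)
    | cons d t' =>
      obtain ⟨hbd, hc2'⟩ := List.isChain_cons_cons.mp hc2
      have hpne : p ≠ [] := by rintro rfl; simp at hh1
      simp only [List.tail_cons]
      refine ⟨?_, ?_, ?_⟩
      · refine hc1.append hc2' ?_
        intro x hx y hy
        rw [hl1] at hx
        simp at hx hy
        subst hx; subst hy; exact hbd
      · rw [List.head?_append_of_ne_nil _ hpne]; exact hh1
      · rw [List.getLast?_append_of_ne_nil _ (by simp : (d :: t') ≠ [])]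
        simpa using hl2

lemma reach_trans {a b c : V} (h1 : Reach G a b) (h2 : Reach G b c) : Reach G a c := by
  obtain ⟨p, hp⟩ := h1; obtain ⟨q, hq⟩ := h2
  exact ⟨p ++ q.tail, isWalk_append hp hq⟩

lemma reach_of_mem {a b : V} {p : List V} (hw : IsWalk G a b p) {y : V} (hy : y ∈ p) :
    Reach G a y ∧ Reach G y b := by
  obtain ⟨l1, l2, rfl⟩ := List.append_of_mem hy
  obtain ⟨hc, hh, hl⟩ := hw
  constructor
  · refine ⟨l1 ++ [y], ?_, ?_, ?_⟩
    · exact hc.prefix ⟨l2, by simp⟩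
    · cases l1 with
      | nil => simpa using hh
      | cons e l1' => simpa using hh
    · simp
  · refine ⟨y :: l2, ?_, rfl, ?_⟩
    · exact hc.suffix ⟨l1, rfl⟩
    · rw [List.getLast?_append_of_ne_nil _ (by simp : (y :: l2) ≠ [])] at hl
      exact hl

lemma anc_refl (T : DFSTree G s) (x : V) : T.Anc x x := ⟨0, rfl⟩

lemma anc_trans {T : DFSTree G s} {a b c : V} (h1 : T.Anc a b) (h2 : T.Anc b c) : T.Anc a c := by
  obtain ⟨n, hn⟩ := h1; obtain ⟨m, hm⟩ := h2
  exact ⟨n + m, by rw [Function.iterate_add_apply, hm, hn]⟩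

lemma anc_s {T : DFSTree G s} {u : V} (h : T.Anc u s) : u = s := by
  obtain ⟨n, hn⟩ := h
  rw [Function.iterate_fixed T.parent_root n] at hn
  exact hn.symm

lemma pre_iterate_le (T : DFSTree G s) : ∀ (n : ℕ) (x : V), T.pre (T.parent^[n] x) ≤ T.pre x := by
  intro n
  induction n with
  | zero => intro x; simp
  | succ n IH =>
    intro x
    rw [Function.iterate_succ_apply']
    by_cases h : T.parent^[n] x = s
    · have hIH := IH x
      rw [h] at hIH
      rw [h, T.parent_root]
      exact hIH
    · exact le_trans (le_of_lt (T.pre_parent _ h)) (IH x)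

lemma pre_anc_le {T : DFSTree G s} {a b : V} (h : T.Anc a b) : T.pre a ≤ T.pre b := by
  obtain ⟨n, hn⟩ := h
  rw [← hn]; exact pre_iterate_le T n b

lemma pre_anc_lt {T : DFSTree G s} {a b : V} (h : T.Anc a b) (hne : a ≠ b) :
    T.pre a < T.pre b :=
  lt_of_le_of_ne (pre_anc_le h) (fun he => hne (T.pre_inj he))

lemma hanc_refl (hp : V → V) (x : V) : HAnc hp x x := ⟨0, rfl⟩

lemma hanc_of_parent {hp : V → V} {u x : V} (h : HAnc hp u (hp x)) : HAnc hp u x := by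
  obtain ⟨m, hm⟩ := h
  exact ⟨m + 1, by rw [Function.iterate_succ_apply]; exact hm⟩

lemma treeWalk_aux (T : DFSTree G s) :
    ∀ (n : ℕ) (x : V), ∃ p, IsWalk G (T.parent^[n] x) x p ∧
      ∀ y ∈ p, T.Anc (T.parent^[n] x) y := by
  intro n
  induction n with
  | zero =>
    intro x
    refine ⟨[x], isWalk_singleton G x, ?_⟩
    intro y hy
    simp only [List.mem_singleton] at hy
    subst hy
    exact anc_refl T _
  | succ n IH =>
    intro x
    by_cases hx : x = s
    · have hfix : T.parent^[n+1] x = x := by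
        rw [hx]; exact Function.iterate_fixed T.parent_root _
      rw [hfix]
      refine ⟨[x], isWalk_singleton G x, ?_⟩
      intro y hy
      simp only [List.mem_singleton] at hy
      subst hy
      exact anc_refl T _
    · obtain ⟨q, hq, hqm⟩ := IH (T.parent x)
      rw [Function.iterate_succ_apply]
      have hedge : IsWalk G (T.parent x) x [T.parent x, x] :=
        isWalk_cons (T.parent_edge x hx) (isWalk_singleton G x)
      refine ⟨q ++ [x], isWalk_append hq hedge, ?_⟩
      intro y hy
      rcases List.mem_append.mp hy with h | h
      · exact hqm y h
      · simp at h; subst h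
        exact ⟨n + 1, by rw [Function.iterate_succ_apply]⟩

lemma treeWalk {T : DFSTree G s} {u x : V} (h : T.Anc u x) :
    ∃ p, IsWalk G u x p ∧ ∀ y ∈ p, T.Anc u y := by
  obtain ⟨n, hn⟩ := h
  obtain ⟨p, hw, hm⟩ := treeWalk_aux T n x
  rw [hn] at hw hm
  exact ⟨p, hw, hm⟩

lemma loopAnc (T : DFSTree G s) {hp : V → V} (hlp : IsLoopParent G s T.Anc hp) :
    ∀ (n : ℕ) (x u : V), T.pre x < n → InLoop G T.Anc u x → HAnc hp u x := by
  intro n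
  induction n using Nat.strong_induction_on with
  | _ n IH =>
    intro x u hxn hin
    by_cases hxu : x = u
    · exact ⟨0, hxu⟩
    by_cases hxs : x = s
    · have h5 : T.Anc u s := by
        obtain ⟨m, hm⟩ := hin.1
        rw [hxs] at hm
        exact ⟨m, hm⟩
      exact absurd (hxs.trans (anc_s h5).symm) hxu
    obtain ⟨h1, h2, h3, h4⟩ := hlp.2 x hxs
    have hanc : T.Anc u x := hin.1
    have hu_hpx : T.Anc u (hp x) := h4 u hanc (fun h => hxu h.symm) hin
    obtain ⟨p, hwp, hmem⟩ := hin.2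
    obtain ⟨q, hq, hqmem⟩ := treeWalk h1
    have hin2 : InLoop G T.Anc u (hp x) := by
      refine ⟨hu_hpx, q ++ p.tail, isWalk_append hq hwp, ?_⟩
      intro y hy
      rcases List.mem_append.mp hy with h | h
      · exact anc_trans hu_hpx (hqmem y h)
      · exact hmem y (List.mem_of_mem_tail h)
    have hlt : T.pre (hp x) < T.pre x := pre_anc_lt h1 h2
    exact hanc_of_parent (IH (T.pre x) hxn (hp x) u hlt hin2)

lemma chain_anc (T : DFSTree G s) (w : V) :
    ∀ (p : List V) (a : V), (a :: p).Chain' G → (∀ y ∈ a :: p, T.pre w ≤ T.pre y) →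
      T.Anc w a → ∀ y ∈ a :: p, T.Anc w y := by
  intro p
  induction p with
  | nil =>
    intro a _ _ hwa y hy
    simp only [List.mem_singleton] at hy
    subst hy
    exact hwa
  | cons b rest IH =>
    intro a hc hpre hwa y hy
    obtain ⟨hab, hc'⟩ := List.isChain_cons_cons.mp hc
    have hwb : T.Anc w b := by
      by_cases hlt : T.pre a < T.pre b
      · exact anc_trans hwa (T.dfs_edge a b hab hlt)
      · exact T.interval w b a hwa (hpre b (by simp)) (le_of_not_gt hlt)
    rcases List.mem_cons.mp hy with rfl | hy'
    · exact hwa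
    · exact IH b hc' (fun z hz => hpre z (List.mem_cons_of_mem _ hz)) hwb y hy'

lemma walk_anc (T : DFSTree G s) (w : V) {p : List V} (hc : p.Chain' G)
    (hpre : ∀ y ∈ p, T.pre w ≤ T.pre y) {a : V} (hh : p.head? = some a)
    (hwa : T.Anc w a) : ∀ y ∈ p, T.Anc w y := by
  cases p with
  | nil => intro y hy; simp at hy
  | cons a' q =>
    have ha : a' = a := by simpa using hh
    exact chain_anc T w q a' hc hpre (by rw [ha]; exact hwa)

end Aux

/-- Every strongly connected component `C ⊆ D(v)` of `G \ (u,v)` contains a vertex `w`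
that is an ancestor in the loop nesting tree `H` of all vertices of `C`. -/
theorem stmt4 (G : V → V → Prop) (hG : StronglyConnected G) (s u v : V)
    (hsb : IsStrongBridge G u v) (hbr : IsBridge G s u v)
    (T : DFSTree G s) (hp : V → V) (hlp : IsLoopParent G s T.Anc hp)
    (C : Set V) (hC : IsSCC (DelEdge G u v) C) (hsub : C ⊆ {x | Dom G s v x}) :
    ∃ w ∈ C, ∀ x ∈ C, HAnc hp w x := by
  classical
  obtain ⟨hne, hconn, hclosed⟩ := hC
  obtain ⟨c, hc⟩ := hne
  have hex : ∃ n, ∃ x, x ∈ C ∧ T.pre x = n := ⟨T.pre c, c, hc, rfl⟩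
  obtain ⟨w, hwC, hwpre⟩ := Nat.find_spec hex
  have hmin : ∀ x ∈ C, T.pre w ≤ T.pre x := by
    intro x hx; rw [hwpre]; exact Nat.find_min' hex ⟨x, hx, rfl⟩
  have memC : ∀ (a b : V), a ∈ C → b ∈ C → ∀ p, IsWalk (DelEdge G u v) a b p →
      ∀ y ∈ p, y ∈ C := by
    intro a b ha hb p hw y hy
    obtain ⟨r1, r2⟩ := reach_of_mem hw hy
    exact hclosed a ha y ⟨r1, reach_trans r2 (hconn b hb a ha).1⟩
  have hancC : ∀ z ∈ C, T.Anc w z := by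
    intro z hz
    obtain ⟨p, hwp⟩ := (hconn w hwC z hz).1
    have hmem : ∀ y ∈ p, y ∈ C := memC w z hwC hz p hwp
    have hpG : IsWalk G w z p := isWalk_mono (fun a b h => h.1) hwp
    have hall := walk_anc T w hpG.1 (fun y hy => hmin y (hmem y hy)) hpG.2.1 (anc_refl T w)
    have hzp : z ∈ p := by
      have := hpG.2.2
      cases p with
      | nil => simp at this
      | cons e q => exact List.mem_of_mem_getLast? (by rw [this]; rfl)
    exact hall z hzp
  refine ⟨w, hwC, fun x hx => ?_⟩
  obtain ⟨q, hq⟩ := (hconn x hx w hwC).1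
  have hmem : ∀ y ∈ q, y ∈ C := memC x w hx hwC q hq
  have hin : InLoop G T.Anc w x :=
    ⟨hancC x hx, q, isWalk_mono (fun a b h => h.1) hq, fun y hy => hancC y (hmem y hy)⟩
  exact loopAnc T hlp (T.pre x + 1) x w (Nat.lt_succ_self _) hin

end StrongConn
end

section
/- Let G be a strongly connected digraph with start vertex s and let e=(u,v) be a common bridge of G_s and G_s^R. If C is a strongly connected component of G\e containing some vertex of D(v) ∩ D^R(u), then C ⊆ D(v) ∩ D^R(u). -/
namespace StrongConn

variable {V : Type*}

section Aux

variable {G H : V → V → Prop} {s u v x y a b c : V} {p q : List V}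

lemma edgeOn_cons_cons {e f a b : V} {l : List V} :
    EdgeOn e f (a :: b :: l) ↔ (e = a ∧ f = b) ∨ EdgeOn e f (b :: l) := by
  simp [EdgeOn, Prod.ext_iff]

lemma edgeOn_iff : EdgeOn a b p ↔ ∃ l₁ l₂, p = l₁ ++ a :: b :: l₂ := by
  induction p with
  | nil =>
    simp only [EdgeOn, List.zip_nil_left, List.not_mem_nil, false_iff]
    rintro ⟨l₁, l₂, h⟩
    cases l₁ <;> simp_all
  | cons z l ih =>
    cases l with
    | nil =>
      simp only [EdgeOn, List.tail_cons, List.zip_nil_right, List.not_mem_nil, false_iff]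
      rintro ⟨l₁, l₂, h⟩
      cases l₁ <;> simp_all
    | cons w l' =>
      constructor
      · intro h
        simp only [EdgeOn, List.tail_cons, List.zip_cons_cons, List.mem_cons,
          Prod.mk.injEq] at h
        rcases h with ⟨rfl, rfl⟩ | h
        · exact ⟨[], l', rfl⟩
        · obtain ⟨l₁, l₂, hl⟩ := ih.mp h
          exact ⟨z :: l₁, l₂, by simp [hl]⟩
      · rintro ⟨l₁, l₂, hl⟩
        cases l₁ with
        | nil =>
          simp only [List.nil_append, List.cons.injEq] at hl
          obtain ⟨rfl, rfl, rfl⟩ := hl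
          simp [EdgeOn]
        | cons z' l₁' =>
          simp only [List.cons_append, List.cons.injEq] at hl
          obtain ⟨rfl, hl⟩ := hl
          have : EdgeOn a b (w :: l') := ih.mpr ⟨l₁', l₂, hl⟩
          simp only [EdgeOn, List.tail_cons, List.zip_cons_cons, List.mem_cons] at this ⊢
          right
          rw [hl]
          rw [hl] at this
          exact this

lemma edgeOn_mem_right (h : EdgeOn a b p) : b ∈ p := by
  obtain ⟨l₁, l₂, rfl⟩ := edgeOn_iff.mp h
  simp

lemma edgeOn_reverse (h : EdgeOn a b p) : EdgeOn b a p.reverse := by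
  obtain ⟨l₁, l₂, rfl⟩ := edgeOn_iff.mp h
  refine edgeOn_iff.mpr ⟨l₂.reverse, l₁.reverse, ?_⟩
  simp

lemma edgeOn_rel (hc : List.Chain' G p) (h : EdgeOn a b p) : G a b := by
  obtain ⟨l₁, l₂, rfl⟩ := edgeOn_iff.mp h
  exact (List.isChain_append_cons_cons.mp hc).2.1

lemma isWalk_imp (hGH : ∀ a b, G a b → H a b) (h : IsWalk G u v p) : IsWalk H u v p :=
  ⟨h.1.imp hGH, h.2.1, h.2.2⟩

lemma isWalk_reverse (h : IsWalk G u v p) : IsWalk (Rev G) v u p.reverse := by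
  obtain ⟨hc, h1, h2⟩ := h
  refine ⟨?_, by simpa using h2, by simpa using h1⟩
  refine List.isChain_reverse.mpr ?_
  exact hc

lemma isWalk_append_s8 (hp : IsWalk G a b p) (hq : IsWalk G b c q) :
    ∃ r, IsWalk G a c r ∧ ∀ e f, EdgeOn e f r → EdgeOn e f p ∨ EdgeOn e f q := by
  obtain ⟨hpc, hp1, hp2⟩ := hp
  cases q with
  | nil => exact absurd hq.2.1 (by simp)
  | cons b' t =>
    obtain rfl : b = b' := by simpa [eq_comm] using hq.2.1
    obtain ⟨hqc, -, hq2⟩ := hq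
    induction p generalizing a with
    | nil => simp at hp1
    | cons z p' ih =>
      obtain rfl : a = z := by simpa [eq_comm] using hp1
      cases p' with
      | nil =>
        have hab : a = b := by simpa using hp2
        subst hab
        exact ⟨a :: t, ⟨hqc, rfl, hq2⟩, fun e f h => Or.inr h⟩
      | cons w p'' =>
        obtain ⟨r', hr', hre⟩ := ih (a := w) hpc.tail rfl (by simpa using hp2)
        obtain ⟨r'', rfl⟩ : ∃ r'', r' = w :: r'' := by
          cases r' with
          | nil => exact absurd hr'.2.1 (by simp)
          | cons z' t' =>
            have hz' : z' = w := by simpa using hr'.2.1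
            exact ⟨t', by rw [hz']⟩
        refine ⟨a :: w :: r'', ⟨?_, rfl, ?_⟩, ?_⟩
        · exact List.isChain_cons_cons.mpr ⟨(List.isChain_cons_cons.mp hpc).1, hr'.1⟩
        · simpa using hr'.2.2
        · intro e f h
          rcases edgeOn_cons_cons.mp h with ⟨rfl, rfl⟩ | h
          · exact Or.inl (edgeOn_cons_cons.mpr (Or.inl ⟨rfl, rfl⟩))
          · rcases hre e f h with h' | h'
            · exact Or.inl (edgeOn_cons_cons.mpr (Or.inr h'))
            · exact Or.inr h'

lemma isWalk_prefix_to_mem (h : IsWalk G s x p) (hv : v ∈ p) :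
    ∃ q, IsWalk G s v q ∧ ∀ a b, EdgeOn a b q → EdgeOn a b p := by
  obtain ⟨l₁, l₂, rfl⟩ := List.append_of_mem hv
  obtain ⟨hc, h1, h2⟩ := h
  refine ⟨l₁ ++ [v], ⟨?_, ?_, ?_⟩, ?_⟩
  · exact hc.prefix ⟨l₂, by simp⟩
  · cases l₁ with
    | nil => simpa using h1
    | cons z l₁' => simpa using h1
  · simp
  · intro a b hab
    obtain ⟨m₁, m₂, hm⟩ := edgeOn_iff.mp hab
    refine edgeOn_iff.mpr ⟨m₁, m₂ ++ l₂, ?_⟩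
    have heq : l₁ ++ v :: l₂ = (l₁ ++ [v]) ++ l₂ := by simp
    rw [heq, hm]
    simp

/-- Key lemma: if `(u,v)` is a bridge of `G_s`, `v` dominates `x`, and there is a walk
from `y` to `x` avoiding the edge `(u,v)`, then `v` dominates `y`. -/
lemma dom_of_walk_avoiding (hbr : IsBridge G s u v) (hdom : Dom G s v x)
    (hq : IsWalk G y x q) (hqe : ¬ EdgeOn u v q) : Dom G s v y := by
  intro p hp
  obtain ⟨r, hr, hre⟩ := isWalk_append_s8 hp hq
  have hvr : v ∈ r := hdom r hr
  obtain ⟨r', hr', hr'e⟩ := isWalk_prefix_to_mem hr hvr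
  have huv : EdgeOn u v r' := hbr.2 r' hr'
  rcases hre u v (hr'e u v huv) with h | h
  · exact edgeOn_mem_right h
  · exact absurd h hqe

end Aux

/-- If `(u,v)` is a common bridge of `G_s` and `G_s^R` and `C` is a strongly connected
component of `G \ (u,v)` meeting `D(v) ∩ D^R(u)`, then `C ⊆ D(v) ∩ D^R(u)`. -/
theorem stmt8 (G : V → V → Prop) (hG : StronglyConnected G) (s u v : V)
    (hsb : IsStrongBridge G u v)
    (hbr : IsBridge G s u v) (hbrR : IsBridge (Rev G) s v u)
    (C : Set V) (hC : IsSCC (DelEdge G u v) C)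
    (x : V) (hx : x ∈ C) (hxD : Dom G s v x ∧ Dom (Rev G) s u x) :
    C ⊆ {y | Dom G s v y ∧ Dom (Rev G) s u y} := by
  intro y hy
  have hS : SConn (DelEdge G u v) y x := hC.2.1 y hy x hx
  obtain ⟨qyx, hqyx⟩ := hS.1
  obtain ⟨qxy, hqxy⟩ := hS.2
  constructor
  · apply dom_of_walk_avoiding hbr hxD.1 (isWalk_imp (fun a b h => h.1) hqyx)
    intro h
    exact (edgeOn_rel hqyx.1 h).2 ⟨rfl, rfl⟩
  · have hrev : IsWalk (Rev (DelEdge G u v)) y x qxy.reverse := isWalk_reverse hqxy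
    apply dom_of_walk_avoiding hbrR hxD.2
      (isWalk_imp (fun a b (h : DelEdge G u v b a) => h.1) hrev)
    intro h
    have h2 := edgeOn_reverse h
    rw [List.reverse_reverse] at h2
    exact (edgeOn_rel hqxy.1 h2).2 ⟨rfl, rfl⟩

end StrongConn
end
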